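/- arXiv:2005.04590 — 2 statements merged into one kernel-verified Lean document; each statement's English description precedes it below -/
import Mathlib

section
/- Let T, S, X, Y be A-bounded operators on H admitting A-adjoints Ts, Ss, Xs, Ys (i.e. A∘Ts = T*∘A, A∘Ss = S*∘A, A∘Xs = X*∘A, A∘Ys = Y*∘A). Then w_𝔸([[T,X],[Y,S]])² ≤ w_𝔸([[0,X],[Y,0]])² + w_𝔸([[0,X∘S],[Y∘T,0]]) + max{w_A(T)², w_A(S)²} + (1/2)·max{‖Ts∘T + X∘Xs‖_A, ‖Ss∘S + Y∘Ys‖_A}. -/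
noncomputable def sInner {E : Type*} [NormedAddCommGroup E] [InnerProductSpace ℂ E]
    (A : E →L[ℂ] E) (x y : E) : ℂ := inner ℂ (A x) y

noncomputable def sNorm {E : Type*} [NormedAddCommGroup E] [InnerProductSpace ℂ E]
    (A : E →L[ℂ] E) (x : E) : ℝ := Real.sqrt (sInner A x x).re

/-- The `A`-operator seminorm. -/
noncomputable def opSNorm {E : Type*} [NormedAddCommGroup E] [InnerProductSpace ℂ E]
    (A T : E →L[ℂ] E) : ℝ := sSup {c | ∃ x : E, sNorm A x = 1 ∧ c = sNorm A (T x)}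

/-- The `A`-numerical radius. -/
noncomputable def numRad {E : Type*} [NormedAddCommGroup E] [InnerProductSpace ℂ E]
    (A T : E →L[ℂ] E) : ℝ := sSup {c | ∃ x : E, sNorm A x = 1 ∧ c = ‖sInner A (T x) x‖}

/-- `T` is `A`-bounded. -/
def ABounded {E : Type*} [NormedAddCommGroup E] [InnerProductSpace ℂ E]
    (A T : E →L[ℂ] E) : Prop := ∃ c > 0, ∀ x : E, sNorm A (T x) ≤ c * sNorm A x

/-- The 2×2 block operator `[[T, X], [Y, S]]` on `H ⊕ H` (with the ℓ² product structure). -/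
noncomputable def blk {H : Type*} [NormedAddCommGroup H] [InnerProductSpace ℂ H]
    (T X Y S : H →L[ℂ] H) : WithLp 2 (H × H) →L[ℂ] WithLp 2 (H × H) :=
  ((WithLp.prodContinuousLinearEquiv 2 ℂ H H).symm.toContinuousLinearMap.comp
    (((T.coprod X).prod (Y.coprod S)).comp
      (WithLp.prodContinuousLinearEquiv 2 ℂ H H).toContinuousLinearMap))

/-- The diagonal operator `𝔸 = diag(A, A)` on `H ⊕ H`. -/
noncomputable def twoA {H : Type*} [NormedAddCommGroup H] [InnerProductSpace ℂ H]
    (A : H →L[ℂ] H) : WithLp 2 (H × H) →L[ℂ] WithLp 2 (H × H) := blk A 0 0 A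

open ComplexConjugate

section Generic
variable {E : Type*} [NormedAddCommGroup E] [InnerProductSpace ℂ E] {B R : E →L[ℂ] E}

lemma sNorm_nonneg (B : E →L[ℂ] E) (x : E) : 0 ≤ sNorm B x := Real.sqrt_nonneg _

lemma inner_self_re' (v : E) : ((inner ℂ v v : ℂ)).re = ‖v‖ ^ 2 := by
  rw [← RCLike.re_to_complex, inner_self_eq_norm_sq (𝕜 := ℂ)]

lemma exists_sqrt [CompleteSpace E] (hB : B.IsPositive) :
    ∃ R : E →L[ℂ] E, ∀ x y, sInner B x y = (inner ℂ (R x) (R y) : ℂ) := by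
  refine ⟨CFC.sqrt B, fun x y => ?_⟩
  have hnn : (0 : E →L[ℂ] E) ≤ B := (ContinuousLinearMap.nonneg_iff_isPositive B).mpr hB
  have hsa : IsSelfAdjoint (CFC.sqrt B) :=
    ((ContinuousLinearMap.nonneg_iff_isPositive _).mp (CFC.sqrt_nonneg B)).isSelfAdjoint
  have hmul : CFC.sqrt B * CFC.sqrt B = B := CFC.sqrt_mul_sqrt_self B hnn
  have h1 : CFC.sqrt B (CFC.sqrt B x) = B x := by
    rw [← ContinuousLinearMap.mul_apply, hmul]
  rw [sInner, ← h1]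
  exact (ContinuousLinearMap.isSelfAdjoint_iff_isSymmetric.mp hsa) (CFC.sqrt B x) y

lemma sNorm_eq (hR : ∀ x y, sInner B x y = (inner ℂ (R x) (R y) : ℂ)) (x : E) :
    sNorm B x = ‖R x‖ := by
  rw [sNorm, hR, inner_self_re']
  exact Real.sqrt_sq (norm_nonneg _)

lemma semiCS (hR : ∀ x y, sInner B x y = (inner ℂ (R x) (R y) : ℂ)) (x y : E) :
    ‖sInner B x y‖ ≤ sNorm B x * sNorm B y := by
  rw [hR, sNorm_eq hR, sNorm_eq hR]
  exact norm_inner_le_norm _ _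

lemma sNorm_add_le (hR : ∀ x y, sInner B x y = (inner ℂ (R x) (R y) : ℂ)) (x y : E) :
    sNorm B (x + y) ≤ sNorm B x + sNorm B y := by
  simp only [sNorm_eq hR, map_add]
  exact norm_add_le _ _

lemma sNorm_smul (hR : ∀ x y, sInner B x y = (inner ℂ (R x) (R y) : ℂ)) (c : ℂ) (x : E) :
    sNorm B (c • x) = ‖c‖ * sNorm B x := by
  simp only [sNorm_eq hR, map_smul, norm_smul]

lemma sNorm_sq (hR : ∀ x y, sInner B x y = (inner ℂ (R x) (R y) : ℂ)) (x : E) :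
    sNorm B x ^ 2 = (sInner B x x).re := by
  rw [sNorm_eq hR, hR, inner_self_re']

/-- Buzano's inequality in a Hilbert space. -/
lemma buzano (e a b : E) (he : ‖e‖ = 1) :
    2 * ‖(inner ℂ a e : ℂ) * (inner ℂ e b : ℂ)‖ ≤ ‖a‖ * ‖b‖ + ‖(inner ℂ a b : ℂ)‖ := by
  set r : E := (2 * (inner ℂ e a : ℂ)) • e - a with hrdef
  have hconj2 : (starRingEnd ℂ) 2 = 2 := map_ofNat _ 2
  have hr : (inner ℂ r b : ℂ) = 2 * (inner ℂ a e : ℂ) * (inner ℂ e b : ℂ) - (inner ℂ a b : ℂ) := by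
    rw [hrdef, inner_sub_left, inner_smul_left, map_mul, hconj2, inner_conj_symm]
  have hnr : ‖r‖ = ‖a‖ := by
    have h1 : ‖r‖ ^ 2 = ‖a‖ ^ 2 := by
      rw [hrdef, @norm_sub_sq ℂ]
      have h2 : ‖(2 * (inner ℂ e a : ℂ)) • e‖ ^ 2 = 4 * ‖(inner ℂ e a : ℂ)‖ ^ 2 := by
        rw [norm_smul, he, mul_one, norm_mul]
        norm_num; ring
      have h3 : RCLike.re (inner ℂ ((2 * (inner ℂ e a : ℂ)) • e) a : ℂ)
          = 2 * ‖(inner ℂ e a : ℂ)‖ ^ 2 := by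
        rw [inner_smul_left]
        have h5 : (starRingEnd ℂ) (2 * (inner ℂ e a : ℂ)) * (inner ℂ e a : ℂ)
            = ((2 * ‖(inner ℂ e a : ℂ)‖ ^ 2 : ℝ) : ℂ) := by
          rw [map_mul, hconj2, mul_assoc, RCLike.conj_mul, Complex.ofReal_mul]
          norm_num
        rw [h5]
        rw [RCLike.re_to_complex, Complex.ofReal_re]
      rw [h2, h3]; ring
    have h6 := Real.sqrt_sq (norm_nonneg r)
    have h7 := Real.sqrt_sq (norm_nonneg a)
    rw [← h6, ← h7, h1]
  have h4 : (2 : ℂ) * (inner ℂ a e : ℂ) * (inner ℂ e b : ℂ) = (inner ℂ r b : ℂ) + (inner ℂ a b : ℂ) := by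
    rw [hr]; ring
  calc 2 * ‖(inner ℂ a e : ℂ) * (inner ℂ e b : ℂ)‖
      = ‖(2 : ℂ) * (inner ℂ a e : ℂ) * (inner ℂ e b : ℂ)‖ := by
        rw [mul_assoc, norm_mul]; norm_num
    _ = ‖(inner ℂ r b : ℂ) + (inner ℂ a b : ℂ)‖ := by rw [h4]
    _ ≤ ‖(inner ℂ r b : ℂ)‖ + ‖(inner ℂ a b : ℂ)‖ := norm_add_le _ _
    _ ≤ ‖r‖ * ‖b‖ + ‖(inner ℂ a b : ℂ)‖ := by gcongr; exact norm_inner_le_norm _ _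
    _ = ‖a‖ * ‖b‖ + ‖(inner ℂ a b : ℂ)‖ := by rw [hnr]

lemma semi_buzano (hR : ∀ x y, sInner B x y = (inner ℂ (R x) (R y) : ℂ)) (e a b : E)
    (he : sNorm B e = 1) :
    2 * ‖sInner B a e * sInner B e b‖ ≤ sNorm B a * sNorm B b + ‖sInner B a b‖ := by
  rw [sNorm_eq hR] at he
  rw [hR, hR, hR, sNorm_eq hR, sNorm_eq hR]
  exact buzano (R e) (R a) (R b) he

end Generic

section Sup
variable {E : Type*} [NormedAddCommGroup E] [InnerProductSpace ℂ E] {B R T' : E →L[ℂ] E}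

lemma numRad_nonneg (B T' : E →L[ℂ] E) : 0 ≤ numRad B T' :=
  Real.sSup_nonneg (by rintro c ⟨x, hx, rfl⟩; exact norm_nonneg _)

lemma opSNorm_nonneg (B T' : E →L[ℂ] E) : 0 ≤ opSNorm B T' :=
  Real.sSup_nonneg (by rintro c ⟨x, hx, rfl⟩; exact sNorm_nonneg _ _)

lemma norm_coe_inv (n : ℝ) (hn : 0 < n) : ‖((n⁻¹ : ℝ) : ℂ)‖ = n⁻¹ := by
  rw [Complex.norm_real]
  exact abs_of_pos (inv_pos.mpr hn)

lemma sInner_smul (B : E →L[ℂ] E) (c : ℂ) (u v : E) :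
    sInner B (c • u) (c • v) = (starRingEnd ℂ) c * (c * sInner B u v) := by
  simp [sInner, map_smul, inner_smul_left, inner_smul_right]
  ring

lemma numRad_bddAbove (hR : ∀ x y, sInner B x y = (inner ℂ (R x) (R y) : ℂ))
    (hb : ABounded B T') :
    BddAbove {c | ∃ x : E, sNorm B x = 1 ∧ c = ‖sInner B (T' x) x‖} := by
  obtain ⟨c, hc, h⟩ := hb
  refine ⟨c, ?_⟩
  rintro t ⟨x, hx, rfl⟩
  calc ‖sInner B (T' x) x‖ ≤ sNorm B (T' x) * sNorm B x := semiCS hR _ _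
    _ ≤ (c * sNorm B x) * sNorm B x := by
        have := h x; nlinarith [sNorm_nonneg B x, sNorm_nonneg B (T' x)]
    _ = c := by rw [hx]; ring

lemma opSNorm_bddAbove (hb : ABounded B T') :
    BddAbove {c | ∃ x : E, sNorm B x = 1 ∧ c = sNorm B (T' x)} := by
  obtain ⟨c, hc, h⟩ := hb
  refine ⟨c, ?_⟩
  rintro t ⟨x, hx, rfl⟩
  simpa [hx] using h x

lemma norm_sInner_le_numRad (hR : ∀ x y, sInner B x y = (inner ℂ (R x) (R y) : ℂ))
    (hb : ABounded B T') (x : E) :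
    ‖sInner B (T' x) x‖ ≤ numRad B T' * sNorm B x ^ 2 := by
  rcases eq_or_ne (sNorm B x) 0 with h0 | h0
  · have h1 : ‖sInner B (T' x) x‖ ≤ 0 := by
      have := semiCS hR (T' x) x
      rw [h0, mul_zero] at this
      exact this
    have h2 : ‖sInner B (T' x) x‖ = 0 := le_antisymm h1 (norm_nonneg _)
    rw [h2, h0]
    simp
  · set n := sNorm B x with hn
    have hnpos : 0 < n := lt_of_le_of_ne (sNorm_nonneg B x) (Ne.symm h0)
    set u : E := ((n⁻¹ : ℝ) : ℂ) • x with hu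
    have hun : sNorm B u = 1 := by
      rw [hu, sNorm_smul hR, norm_coe_inv n hnpos, ← hn]
      field_simp
    have hmem : ‖sInner B (T' u) u‖ ∈
        {c | ∃ x : E, sNorm B x = 1 ∧ c = ‖sInner B (T' x) x‖} := ⟨u, hun, rfl⟩
    have hle : ‖sInner B (T' u) u‖ ≤ numRad B T' :=
      le_csSup (numRad_bddAbove hR hb) hmem
    have hval : ‖sInner B (T' u) u‖ = (n⁻¹) ^ 2 * ‖sInner B (T' x) x‖ := by
      rw [hu, map_smul, sInner_smul, norm_mul, norm_mul, RCLike.norm_conj,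
        norm_coe_inv n hnpos]
      ring
    rw [hval] at hle
    have : ‖sInner B (T' x) x‖ = n ^ 2 * ((n⁻¹) ^ 2 * ‖sInner B (T' x) x‖) := by
      rw [← mul_assoc]
      rw [show n ^ 2 * (n⁻¹) ^ 2 = (n * n⁻¹) ^ 2 by ring, mul_inv_cancel₀ h0]
      norm_num
    rw [this]
    calc n ^ 2 * ((n⁻¹) ^ 2 * ‖sInner B (T' x) x‖) ≤ n ^ 2 * numRad B T' := by
          have : (0:ℝ) ≤ n ^ 2 := sq_nonneg n
          nlinarith
      _ = numRad B T' * n ^ 2 := by ring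

lemma sNorm_le_opSNorm (hR : ∀ x y, sInner B x y = (inner ℂ (R x) (R y) : ℂ))
    (hb : ABounded B T') (x : E) :
    sNorm B (T' x) ≤ opSNorm B T' * sNorm B x := by
  rcases eq_or_ne (sNorm B x) 0 with h0 | h0
  · obtain ⟨c, hc, h⟩ := hb
    have h1 := h x
    rw [h0, mul_zero] at h1
    have h2 : sNorm B (T' x) = 0 := le_antisymm h1 (sNorm_nonneg _ _)
    rw [h2, h0, mul_zero]
  · set n := sNorm B x with hn
    have hnpos : 0 < n := lt_of_le_of_ne (sNorm_nonneg B x) (Ne.symm h0)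
    set u : E := ((n⁻¹ : ℝ) : ℂ) • x with hu
    have hun : sNorm B u = 1 := by
      rw [hu, sNorm_smul hR, norm_coe_inv n hnpos, ← hn]
      field_simp
    have hle : sNorm B (T' u) ≤ opSNorm B T' :=
      le_csSup (opSNorm_bddAbove hb) ⟨u, hun, rfl⟩
    have hval : sNorm B (T' u) = n⁻¹ * sNorm B (T' x) := by
      rw [hu, map_smul, sNorm_smul hR, norm_coe_inv n hnpos]
    rw [hval] at hle
    calc sNorm B (T' x) = n * (n⁻¹ * sNorm B (T' x)) := by
          rw [← mul_assoc, mul_inv_cancel₀ h0, one_mul]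
      _ ≤ n * opSNorm B T' := by nlinarith
      _ = opSNorm B T' * n := by ring

lemma abounded_add (hR : ∀ x y, sInner B x y = (inner ℂ (R x) (R y) : ℂ))
    {f g : E →L[ℂ] E} (hf : ABounded B f) (hg : ABounded B g) : ABounded B (f + g) := by
  obtain ⟨c, hc, h⟩ := hf
  obtain ⟨d, hd, h'⟩ := hg
  refine ⟨c + d, by linarith, fun x => ?_⟩
  calc sNorm B ((f + g) x) = sNorm B (f x + g x) := rfl
    _ ≤ sNorm B (f x) + sNorm B (g x) := sNorm_add_le hR _ _
    _ ≤ c * sNorm B x + d * sNorm B x := add_le_add (h x) (h' x)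
    _ = (c + d) * sNorm B x := by ring

lemma abounded_comp {f g : E →L[ℂ] E} (hf : ABounded B f) (hg : ABounded B g) :
    ABounded B (f.comp g) := by
  obtain ⟨c, hc, h⟩ := hf
  obtain ⟨d, hd, h'⟩ := hg
  refine ⟨c * d, mul_pos hc hd, fun x => ?_⟩
  calc sNorm B (f (g x)) ≤ c * sNorm B (g x) := h _
    _ ≤ c * (d * sNorm B x) := by nlinarith [h' x, sNorm_nonneg B (g x)]
    _ = (c * d) * sNorm B x := by ring

end Sup

section Block
variable {H : Type*} [NormedAddCommGroup H] [InnerProductSpace ℂ H] [CompleteSpace H]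

lemma blk_fst (T X Y S : H →L[ℂ] H) (z : WithLp 2 (H × H)) :
    (blk T X Y S z).fst = T z.fst + X z.snd := rfl

lemma blk_snd (T X Y S : H →L[ℂ] H) (z : WithLp 2 (H × H)) :
    (blk T X Y S z).snd = Y z.fst + S z.snd := rfl

lemma twoA_fst (A : H →L[ℂ] H) (z : WithLp 2 (H × H)) : (twoA A z).fst = A z.fst := by
  rw [twoA, blk_fst]; simp

lemma twoA_snd (A : H →L[ℂ] H) (z : WithLp 2 (H × H)) : (twoA A z).snd = A z.snd := by
  rw [twoA, blk_snd]; simp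

lemma twoA_sInner (A : H →L[ℂ] H) (u v : WithLp 2 (H × H)) :
    sInner (twoA A) u v = sInner A u.fst v.fst + sInner A u.snd v.snd := by
  rw [sInner, WithLp.prod_inner_apply]
  simp only [WithLp.ofLp_fst, WithLp.ofLp_snd]
  rw [twoA_fst, twoA_snd]
  rfl

lemma asym {A : H →L[ℂ] H} (hA : A.IsPositive) (u v : H) :
    (inner ℂ (A u) v : ℂ) = inner ℂ u (A v) :=
  hA.1 u v

lemma sInner_re_nonneg {A : H →L[ℂ] H} (hA : A.IsPositive) (x : H) :
    0 ≤ (sInner A x x).re := by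
  exact (Complex.nonneg_iff.mp (hA.inner_nonneg_left x)).1

lemma twoA_isPositive {A : H →L[ℂ] H} (hA : A.IsPositive) : (twoA A).IsPositive := by
  constructor
  · intro u v
    show (inner ℂ ((twoA A) u) v : ℂ) = inner ℂ u ((twoA A) v)
    rw [WithLp.prod_inner_apply, WithLp.prod_inner_apply]
    simp only [WithLp.ofLp_fst, WithLp.ofLp_snd]
    rw [twoA_fst, twoA_snd,
      twoA_fst, twoA_snd, asym hA u.fst v.fst, asym hA u.snd v.snd]
  · intro z
    have h : (twoA A).reApplyInnerSelf z = (sInner A z.fst z.fst).re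
        + (sInner A z.snd z.snd).re := by
      have := twoA_sInner A z z
      simp only [ContinuousLinearMap.reApplyInnerSelf]
      rw [show (inner ℂ (twoA A z) z : ℂ) = sInner (twoA A) z z from rfl, this]
      simp
    rw [h]
    exact add_nonneg (sInner_re_nonneg hA _) (sInner_re_nonneg hA _)

lemma twoA_sNorm_sq {A : H →L[ℂ] H} (hA : A.IsPositive) (u : WithLp 2 (H × H)) :
    sNorm (twoA A) u ^ 2 = sNorm A u.fst ^ 2 + sNorm A u.snd ^ 2 := by
  have e := twoA_sInner A u u
  have h1 := sInner_re_nonneg hA u.fst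
  have h2 := sInner_re_nonneg hA u.snd
  rw [sNorm, sNorm, sNorm, Real.sq_sqrt (by rw [e, Complex.add_re]; linarith),
    Real.sq_sqrt h1, Real.sq_sqrt h2, e, Complex.add_re]

lemma le_of_sq_le_sq' {a b : ℝ} (ha : 0 ≤ a) (hb : 0 ≤ b) (h : a ^ 2 ≤ b ^ 2) : a ≤ b := by
  by_contra h'
  push_neg at h'
  nlinarith

lemma abounded_zero {A : H →L[ℂ] H} : ABounded A (0 : H →L[ℂ] H) := by
  refine ⟨1, one_pos, fun x => ?_⟩
  have : sNorm A ((0 : H →L[ℂ] H) x) = 0 := by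
    simp [sNorm, sInner]
  rw [this, one_mul]
  exact sNorm_nonneg _ _

lemma abounded_blk {A : H →L[ℂ] H} {RA : H →L[ℂ] H}
    (hA : A.IsPositive) (hRA : ∀ x y, sInner A x y = (inner ℂ (RA x) (RA y) : ℂ))
    {T X Y S : H →L[ℂ] H}
    (hT : ABounded A T) (hX : ABounded A X) (hY : ABounded A Y) (hS : ABounded A S) :
    ABounded (twoA A) (blk T X Y S) := by
  obtain ⟨cT, hcT, hT'⟩ := hT
  obtain ⟨cX, hcX, hX'⟩ := hX
  obtain ⟨cY, hcY, hY'⟩ := hY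
  obtain ⟨cS, hcS, hS'⟩ := hS
  set c := cT + cX + cY + cS with hc
  refine ⟨2 * c, by linarith, fun z => ?_⟩
  set nx := sNorm A z.fst with hnx
  set ny := sNorm A z.snd with hny
  have hnx0 : 0 ≤ nx := sNorm_nonneg _ _
  have hny0 : 0 ≤ ny := sNorm_nonneg _ _
  have h1 : sNorm A (blk T X Y S z).fst ≤ cT * nx + cX * ny := by
    rw [blk_fst]
    calc sNorm A (T z.fst + X z.snd) ≤ sNorm A (T z.fst) + sNorm A (X z.snd) :=
          sNorm_add_le hRA _ _
      _ ≤ cT * nx + cX * ny := add_le_add (hT' _) (hX' _)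
  have h2 : sNorm A (blk T X Y S z).snd ≤ cY * nx + cS * ny := by
    rw [blk_snd]
    calc sNorm A (Y z.fst + S z.snd) ≤ sNorm A (Y z.fst) + sNorm A (S z.snd) :=
          sNorm_add_le hRA _ _
      _ ≤ cY * nx + cS * ny := add_le_add (hY' _) (hS' _)
  have hz : sNorm (twoA A) z ^ 2 = nx ^ 2 + ny ^ 2 := twoA_sNorm_sq hA z
  have hbz : sNorm (twoA A) (blk T X Y S z) ^ 2
      = sNorm A (blk T X Y S z).fst ^ 2 + sNorm A (blk T X Y S z).snd ^ 2 :=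
    twoA_sNorm_sq hA _
  have hc0 : 0 < c := by rw [hc]; linarith
  apply le_of_sq_le_sq' (sNorm_nonneg _ _)
  · nlinarith [sNorm_nonneg (twoA A) z]
  · rw [hbz, mul_pow, hz]
    have e1 : sNorm A (blk T X Y S z).fst ^ 2 ≤ (cT * nx + cX * ny) ^ 2 :=
      pow_le_pow_left₀ (sNorm_nonneg _ _) h1 2
    have e2 : sNorm A (blk T X Y S z).snd ^ 2 ≤ (cY * nx + cS * ny) ^ 2 :=
      pow_le_pow_left₀ (sNorm_nonneg _ _) h2 2
    have f1 : cT * nx + cX * ny ≤ c * (nx + ny) := by rw [hc]; nlinarith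
    have f2 : cY * nx + cS * ny ≤ c * (nx + ny) := by rw [hc]; nlinarith
    have g1 : (cT * nx + cX * ny) ^ 2 ≤ (c * (nx + ny)) ^ 2 :=
      pow_le_pow_left₀ (add_nonneg (mul_nonneg hcT.le hnx0) (mul_nonneg hcX.le hny0)) f1 2
    have g2 : (cY * nx + cS * ny) ^ 2 ≤ (c * (nx + ny)) ^ 2 :=
      pow_le_pow_left₀ (add_nonneg (mul_nonneg hcY.le hnx0) (mul_nonneg hcS.le hny0)) f2 2
    have g3 : (c * (nx + ny)) ^ 2 ≤ 2 * c ^ 2 * (nx ^ 2 + ny ^ 2) := by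
      nlinarith [sq_nonneg (nx - ny), sq_nonneg c]
    linarith

lemma abounded_adjoint {A : H →L[ℂ] H} {RA : H →L[ℂ] H}
    (hA : A.IsPositive) (hRA : ∀ x y, sInner A x y = (inner ℂ (RA x) (RA y) : ℂ))
    {T Ts : H →L[ℂ] H} (hTs : A.comp Ts = (ContinuousLinearMap.adjoint T).comp A)
    (hT : ABounded A T) : ABounded A Ts := by
  obtain ⟨c, hc, h⟩ := hT
  refine ⟨c, hc, fun x => ?_⟩
  have hATs : ∀ v : H, A (Ts v) = (ContinuousLinearMap.adjoint T) (A v) := fun v => by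
    rw [← ContinuousLinearMap.comp_apply, hTs, ContinuousLinearMap.comp_apply]
  have key : sNorm A (Ts x) ^ 2 ≤ c * sNorm A (Ts x) * sNorm A x := by
    rw [sNorm_sq hRA]
    have e1 : sInner A (Ts x) (Ts x) = (inner ℂ (A x) (T (Ts x)) : ℂ) := by
      rw [sInner, hATs, ContinuousLinearMap.adjoint_inner_left]
    have e2 : ((inner ℂ (A x) (T (Ts x)) : ℂ)).re = (sInner A (T (Ts x)) x).re := by
      rw [sInner, ← inner_conj_symm (A x), asym hA, Complex.conj_re]
    calc (sInner A (Ts x) (Ts x)).re = (sInner A (T (Ts x)) x).re := by rw [e1, e2]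
      _ ≤ ‖sInner A (T (Ts x)) x‖ := Complex.re_le_norm _
      _ ≤ sNorm A (T (Ts x)) * sNorm A x := semiCS hRA _ _
      _ ≤ (c * sNorm A (Ts x)) * sNorm A x := by
          have := h (Ts x)
          nlinarith [sNorm_nonneg A x]
  rcases eq_or_lt_of_le (sNorm_nonneg A (Ts x)) with h0 | h0
  · rw [← h0]
    exact mul_nonneg hc.le (sNorm_nonneg A x)
  · nlinarith [sNorm_nonneg A x]

end Block

section Ident
variable {H : Type*} [NormedAddCommGroup H] [InnerProductSpace ℂ H] [CompleteSpace H]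
variable {A : H →L[ℂ] H}

lemma adj_shift (hA : A.IsPositive) {Y Ys : H →L[ℂ] H}
    (hYs : A.comp Ys = (ContinuousLinearMap.adjoint Y).comp A) (u v : H) :
    sInner A u (Ys v) = sInner A (Y u) v := by
  have h1 : A (Ys v) = (ContinuousLinearMap.adjoint Y) (A v) := by
    rw [← ContinuousLinearMap.comp_apply, hYs, ContinuousLinearMap.comp_apply]
  rw [sInner, sInner, asym hA, h1, ContinuousLinearMap.adjoint_inner_right, asym hA]

lemma comp_adj_left (hA : A.IsPositive) {T Ts : H →L[ℂ] H}
    (hTs : A.comp Ts = (ContinuousLinearMap.adjoint T).comp A) (u : H) :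
    sInner A ((Ts.comp T) u) u = sInner A (T u) (T u) := by
  have h1 : A (Ts (T u)) = (ContinuousLinearMap.adjoint T) (A (T u)) := by
    rw [← ContinuousLinearMap.comp_apply A Ts, hTs, ContinuousLinearMap.comp_apply]
  rw [sInner, ContinuousLinearMap.comp_apply, h1, ContinuousLinearMap.adjoint_inner_left, sInner]

lemma comp_adj_right (hA : A.IsPositive) {X Xs : H →L[ℂ] H}
    (hXs : A.comp Xs = (ContinuousLinearMap.adjoint X).comp A) (u : H) :
    sInner A ((X.comp Xs) u) u = sInner A (Xs u) (Xs u) := by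
  have h1 : (ContinuousLinearMap.adjoint X) (A u) = A (Xs u) := by
    rw [← ContinuousLinearMap.comp_apply, ← hXs, ContinuousLinearMap.comp_apply]
  rw [sInner, ContinuousLinearMap.comp_apply, asym hA,
    ← ContinuousLinearMap.adjoint_inner_right, h1, sInner, asym hA]

lemma max_sq_le {a b : ℝ} : max a b ^ 2 ≤ max (a ^ 2) (b ^ 2) := by
  rcases le_total a b with h | h
  · rw [max_eq_right h]; exact le_max_right _ _
  · rw [max_eq_left h]; exact le_max_left _ _

end Ident

set_option maxHeartbeats 2000000 in
theorem stmt12 {H : Type*} [NormedAddCommGroup H] [InnerProductSpace ℂ H] [CompleteSpace H]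
    (A : H →L[ℂ] H) (hA : A.IsPositive)
    (T S X Y Ts Ss Xs Ys : H →L[ℂ] H)
    (hT : ABounded A T) (hS : ABounded A S) (hX : ABounded A X) (hY : ABounded A Y)
    (hTs : A.comp Ts = (ContinuousLinearMap.adjoint T).comp A)
    (hSs : A.comp Ss = (ContinuousLinearMap.adjoint S).comp A)
    (hXs : A.comp Xs = (ContinuousLinearMap.adjoint X).comp A)
    (hYs : A.comp Ys = (ContinuousLinearMap.adjoint Y).comp A) :
    (numRad (twoA A) (blk T X Y S)) ^ 2 ≤
      (numRad (twoA A) (blk 0 X Y 0)) ^ 2 + numRad (twoA A) (blk 0 (X.comp S) (Y.comp T) 0) +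
        max ((numRad A T) ^ 2) ((numRad A S) ^ 2) +
          (1 / 2) * max (opSNorm A (Ts.comp T + X.comp Xs)) (opSNorm A (Ss.comp S + Y.comp Ys)) := by
  obtain ⟨RA, hRA⟩ := exists_sqrt hA
  have h2A : (twoA A).IsPositive := twoA_isPositive hA
  obtain ⟨RB, hRB⟩ := exists_sqrt h2A
  have hTsB : ABounded A Ts := abounded_adjoint hA hRA hTs hT
  have hSsB : ABounded A Ss := abounded_adjoint hA hRA hSs hS
  have hXsB : ABounded A Xs := abounded_adjoint hA hRA hXs hX
  have hYsB : ABounded A Ys := abounded_adjoint hA hRA hYs hY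
  have hC : ABounded (twoA A) (blk 0 X Y 0) :=
    abounded_blk hA hRA abounded_zero hX hY abounded_zero
  have hCD : ABounded (twoA A) (blk 0 (X.comp S) (Y.comp T) 0) :=
    abounded_blk hA hRA abounded_zero (abounded_comp hX hS) (abounded_comp hY hT) abounded_zero
  have hP : ABounded A (Ts.comp T + X.comp Xs) :=
    abounded_add hRA (abounded_comp hTsB hT) (abounded_comp hX hXsB)
  have hQ : ABounded A (Ss.comp S + Y.comp Ys) :=
    abounded_add hRA (abounded_comp hSsB hS) (abounded_comp hY hYsB)
  have hw10 : 0 ≤ numRad (twoA A) (blk 0 X Y 0) := numRad_nonneg _ _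
  have hw20 : 0 ≤ numRad (twoA A) (blk 0 (X.comp S) (Y.comp T) 0) := numRad_nonneg _ _
  have hop0 : 0 ≤ max (opSNorm A (Ts.comp T + X.comp Xs)) (opSNorm A (Ss.comp S + Y.comp Ys)) :=
    le_trans (opSNorm_nonneg _ _) (le_max_left _ _)
  have hmx0 : 0 ≤ max ((numRad A T) ^ 2) ((numRad A S) ^ 2) :=
    le_trans (sq_nonneg _) (le_max_left _ _)
  have hRHS0 : 0 ≤ (numRad (twoA A) (blk 0 X Y 0)) ^ 2
      + numRad (twoA A) (blk 0 (X.comp S) (Y.comp T) 0)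
      + max ((numRad A T) ^ 2) ((numRad A S) ^ 2)
      + (1 / 2) * max (opSNorm A (Ts.comp T + X.comp Xs))
          (opSNorm A (Ss.comp S + Y.comp Ys)) := by
    have := sq_nonneg (numRad (twoA A) (blk 0 X Y 0))
    linarith
  have key : ∀ c ∈ {c | ∃ z : WithLp 2 (H × H),
      sNorm (twoA A) z = 1 ∧ c = ‖sInner (twoA A) (blk T X Y S z) z‖},
      c ≤ Real.sqrt ((numRad (twoA A) (blk 0 X Y 0)) ^ 2
        + numRad (twoA A) (blk 0 (X.comp S) (Y.comp T) 0)
        + max ((numRad A T) ^ 2) ((numRad A S) ^ 2)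
        + (1 / 2) * max (opSNorm A (Ts.comp T + X.comp Xs))
            (opSNorm A (Ss.comp S + Y.comp Ys))) := by
    rintro _ ⟨z, hz, rfl⟩
    have hz2 : sNorm A z.fst ^ 2 + sNorm A z.snd ^ 2 = 1 := by
      have h := twoA_sNorm_sq hA z
      rw [hz] at h
      simpa using h.symm
    -- split into diagonal and off-diagonal parts
    have hsplit : sInner (twoA A) (blk T X Y S z) z
        = sInner (twoA A) (blk 0 X Y 0 z) z + sInner (twoA A) (blk T 0 0 S z) z := by
      rw [twoA_sInner, twoA_sInner, twoA_sInner, blk_fst, blk_snd, blk_fst, blk_snd,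
        blk_fst, blk_snd]
      simp only [ContinuousLinearMap.zero_apply, add_zero, zero_add, sInner, map_add,
        inner_add_left]
      ring
    -- bound on the off-diagonal term
    have hC1 : ‖sInner (twoA A) (blk 0 X Y 0 z) z‖ ≤ numRad (twoA A) (blk 0 X Y 0) := by
      have h := norm_sInner_le_numRad hRB hC z
      rw [hz] at h
      simpa using h
    -- bound on the diagonal term
    have hcD_eq : sInner (twoA A) (blk T 0 0 S z) z
        = sInner A (T z.fst) z.fst + sInner A (S z.snd) z.snd := by
      rw [twoA_sInner, blk_fst, blk_snd]
      simp only [ContinuousLinearMap.zero_apply, add_zero, zero_add]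
    have hD1 : ‖sInner (twoA A) (blk T 0 0 S z) z‖ ≤ max (numRad A T) (numRad A S) := by
      rw [hcD_eq]
      have hwT := norm_sInner_le_numRad hRA hT z.fst
      have hwS := norm_sInner_le_numRad hRA hS z.snd
      have h1 : numRad A T ≤ max (numRad A T) (numRad A S) := le_max_left _ _
      have h2 : numRad A S ≤ max (numRad A T) (numRad A S) := le_max_right _ _
      calc ‖sInner A (T z.fst) z.fst + sInner A (S z.snd) z.snd‖
          ≤ ‖sInner A (T z.fst) z.fst‖ + ‖sInner A (S z.snd) z.snd‖ := norm_add_le _ _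
        _ ≤ numRad A T * sNorm A z.fst ^ 2 + numRad A S * sNorm A z.snd ^ 2 :=
            add_le_add hwT hwS
        _ ≤ max (numRad A T) (numRad A S) * sNorm A z.fst ^ 2
            + max (numRad A T) (numRad A S) * sNorm A z.snd ^ 2 := by
            nlinarith [sq_nonneg (sNorm A z.fst), sq_nonneg (sNorm A z.snd)]
        _ = max (numRad A T) (numRad A S) := by rw [← mul_add, hz2, mul_one]
    -- the auxiliary vector for Buzano
    have hzw : sInner (twoA A) z (blk 0 Ys Xs 0 z) = sInner (twoA A) (blk 0 X Y 0 z) z := by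
      rw [twoA_sInner, twoA_sInner, blk_fst, blk_snd, blk_fst, blk_snd]
      simp only [ContinuousLinearMap.zero_apply, add_zero, zero_add]
      rw [adj_shift hA hYs, adj_shift hA hXs]
      ring
    have hDw : sInner (twoA A) (blk T 0 0 S z) (blk 0 Ys Xs 0 z)
        = sInner (twoA A) (blk 0 (X.comp S) (Y.comp T) 0 z) z := by
      rw [twoA_sInner, twoA_sInner, blk_fst, blk_snd, blk_fst, blk_snd, blk_fst, blk_snd]
      simp only [ContinuousLinearMap.zero_apply, add_zero, zero_add,
        ContinuousLinearMap.comp_apply]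
      rw [adj_shift hA hYs, adj_shift hA hXs]
      ring
    have hbuz := semi_buzano hRB z (blk T 0 0 S z) (blk 0 Ys Xs 0 z) hz
    rw [hDw, hzw] at hbuz
    have hCD1 : ‖sInner (twoA A) (blk 0 (X.comp S) (Y.comp T) 0 z) z‖
        ≤ numRad (twoA A) (blk 0 (X.comp S) (Y.comp T) 0) := by
      have h := norm_sInner_le_numRad hRB hCD z
      rw [hz] at h
      simpa using h
    -- bound for the seminorm product term
    have c1 : (blk T 0 0 S z).fst = T z.fst := by rw [blk_fst]; simp
    have c2 : (blk T 0 0 S z).snd = S z.snd := by rw [blk_snd]; simp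
    have c3 : (blk 0 Ys Xs 0 z).fst = Ys z.snd := by rw [blk_fst]; simp
    have c4 : (blk 0 Ys Xs 0 z).snd = Xs z.fst := by rw [blk_snd]; simp
    have iP : sNorm A (T z.fst) ^ 2 + sNorm A (Xs z.fst) ^ 2
        = (sInner A ((Ts.comp T + X.comp Xs) z.fst) z.fst).re := by
      have hadd : sInner A ((Ts.comp T + X.comp Xs) z.fst) z.fst
          = sInner A ((Ts.comp T) z.fst) z.fst + sInner A ((X.comp Xs) z.fst) z.fst := by
        simp only [sInner, ContinuousLinearMap.add_apply, map_add, inner_add_left]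
      rw [hadd, comp_adj_left hA hTs, comp_adj_right hA hXs, Complex.add_re,
        sNorm_sq hRA, sNorm_sq hRA]
    have iQ : sNorm A (S z.snd) ^ 2 + sNorm A (Ys z.snd) ^ 2
        = (sInner A ((Ss.comp S + Y.comp Ys) z.snd) z.snd).re := by
      have hadd : sInner A ((Ss.comp S + Y.comp Ys) z.snd) z.snd
          = sInner A ((Ss.comp S) z.snd) z.snd + sInner A ((Y.comp Ys) z.snd) z.snd := by
        simp only [sInner, ContinuousLinearMap.add_apply, map_add, inner_add_left]
      rw [hadd, comp_adj_left hA hSs, comp_adj_right hA hYs, Complex.add_re,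
        sNorm_sq hRA, sNorm_sq hRA]
    have jP : (sInner A ((Ts.comp T + X.comp Xs) z.fst) z.fst).re
        ≤ opSNorm A (Ts.comp T + X.comp Xs) * sNorm A z.fst ^ 2 := by
      calc (sInner A ((Ts.comp T + X.comp Xs) z.fst) z.fst).re
          ≤ ‖sInner A ((Ts.comp T + X.comp Xs) z.fst) z.fst‖ := Complex.re_le_norm _
        _ ≤ sNorm A ((Ts.comp T + X.comp Xs) z.fst) * sNorm A z.fst := semiCS hRA _ _
        _ ≤ opSNorm A (Ts.comp T + X.comp Xs) * sNorm A z.fst ^ 2 := by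
            have h := sNorm_le_opSNorm hRA hP z.fst
            nlinarith [sNorm_nonneg A z.fst]
    have jQ : (sInner A ((Ss.comp S + Y.comp Ys) z.snd) z.snd).re
        ≤ opSNorm A (Ss.comp S + Y.comp Ys) * sNorm A z.snd ^ 2 := by
      calc (sInner A ((Ss.comp S + Y.comp Ys) z.snd) z.snd).re
          ≤ ‖sInner A ((Ss.comp S + Y.comp Ys) z.snd) z.snd‖ := Complex.re_le_norm _
        _ ≤ sNorm A ((Ss.comp S + Y.comp Ys) z.snd) * sNorm A z.snd := semiCS hRA _ _
        _ ≤ opSNorm A (Ss.comp S + Y.comp Ys) * sNorm A z.snd ^ 2 := by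
            have h := sNorm_le_opSNorm hRA hQ z.snd
            nlinarith [sNorm_nonneg A z.snd]
    have hNsq : sNorm (twoA A) (blk T 0 0 S z) ^ 2 + sNorm (twoA A) (blk 0 Ys Xs 0 z) ^ 2
        ≤ max (opSNorm A (Ts.comp T + X.comp Xs)) (opSNorm A (Ss.comp S + Y.comp Ys)) := by
      rw [twoA_sNorm_sq hA, twoA_sNorm_sq hA, c1, c2, c3, c4]
      have m1 : opSNorm A (Ts.comp T + X.comp Xs)
          ≤ max (opSNorm A (Ts.comp T + X.comp Xs)) (opSNorm A (Ss.comp S + Y.comp Ys)) :=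
        le_max_left _ _
      have m2 : opSNorm A (Ss.comp S + Y.comp Ys)
          ≤ max (opSNorm A (Ts.comp T + X.comp Xs)) (opSNorm A (Ss.comp S + Y.comp Ys)) :=
        le_max_right _ _
      nlinarith [iP, iQ, jP, jQ, sq_nonneg (sNorm A z.fst), sq_nonneg (sNorm A z.snd), hz2]
    have habmul : sNorm (twoA A) (blk T 0 0 S z) * sNorm (twoA A) (blk 0 Ys Xs 0 z)
        ≤ (1/2) * max (opSNorm A (Ts.comp T + X.comp Xs)) (opSNorm A (Ss.comp S + Y.comp Ys)) := by
      nlinarith [sq_nonneg (sNorm (twoA A) (blk T 0 0 S z) - sNorm (twoA A) (blk 0 Ys Xs 0 z)),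
        hNsq]
    have hcross : 2 * (‖sInner (twoA A) (blk 0 X Y 0 z) z‖
          * ‖sInner (twoA A) (blk T 0 0 S z) z‖)
        ≤ (1/2) * max (opSNorm A (Ts.comp T + X.comp Xs)) (opSNorm A (Ss.comp S + Y.comp Ys))
          + numRad (twoA A) (blk 0 (X.comp S) (Y.comp T) 0) := by
      have hnm : ‖sInner (twoA A) (blk T 0 0 S z) z * sInner (twoA A) (blk 0 X Y 0 z) z‖
          = ‖sInner (twoA A) (blk 0 X Y 0 z) z‖ * ‖sInner (twoA A) (blk T 0 0 S z) z‖ := by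
        rw [norm_mul]; ring
      rw [hnm] at hbuz
      linarith [hbuz, habmul, hCD1]
    -- assemble
    have hfin : ‖sInner (twoA A) (blk T X Y S z) z‖ ^ 2
        ≤ (numRad (twoA A) (blk 0 X Y 0)) ^ 2
          + numRad (twoA A) (blk 0 (X.comp S) (Y.comp T) 0)
          + max ((numRad A T) ^ 2) ((numRad A S) ^ 2)
          + (1 / 2) * max (opSNorm A (Ts.comp T + X.comp Xs))
              (opSNorm A (Ss.comp S + Y.comp Ys)) := by
      rw [hsplit]
      have e0 : ‖sInner (twoA A) (blk 0 X Y 0 z) z + sInner (twoA A) (blk T 0 0 S z) z‖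
          ≤ ‖sInner (twoA A) (blk 0 X Y 0 z) z‖ + ‖sInner (twoA A) (blk T 0 0 S z) z‖ :=
        norm_add_le _ _
      have e1 := pow_le_pow_left₀ (norm_nonneg _) e0 2
      have e2 : ‖sInner (twoA A) (blk 0 X Y 0 z) z‖ ^ 2
          ≤ (numRad (twoA A) (blk 0 X Y 0)) ^ 2 :=
        pow_le_pow_left₀ (norm_nonneg _) hC1 2
      have e3 : ‖sInner (twoA A) (blk T 0 0 S z) z‖ ^ 2
          ≤ max ((numRad A T) ^ 2) ((numRad A S) ^ 2) :=
        le_trans (pow_le_pow_left₀ (norm_nonneg _) hD1 2) max_sq_le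
      have expand : (‖sInner (twoA A) (blk 0 X Y 0 z) z‖
            + ‖sInner (twoA A) (blk T 0 0 S z) z‖) ^ 2
          = ‖sInner (twoA A) (blk 0 X Y 0 z) z‖ ^ 2
            + 2 * (‖sInner (twoA A) (blk 0 X Y 0 z) z‖
              * ‖sInner (twoA A) (blk T 0 0 S z) z‖)
            + ‖sInner (twoA A) (blk T 0 0 S z) z‖ ^ 2 := by ring
      rw [expand] at e1
      linarith [hcross, e1, e2, e3]
    rw [← Real.sqrt_sq (norm_nonneg (sInner (twoA A) (blk T X Y S z) z))]
    exact Real.sqrt_le_sqrt hfin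
  have hle := Real.sSup_le key (Real.sqrt_nonneg _)
  calc (numRad (twoA A) (blk T X Y S)) ^ 2
      ≤ Real.sqrt ((numRad (twoA A) (blk 0 X Y 0)) ^ 2
        + numRad (twoA A) (blk 0 (X.comp S) (Y.comp T) 0)
        + max ((numRad A T) ^ 2) ((numRad A S) ^ 2)
        + (1 / 2) * max (opSNorm A (Ts.comp T + X.comp Xs))
            (opSNorm A (Ss.comp S + Y.comp Ys))) ^ 2 :=
      pow_le_pow_left₀ (numRad_nonneg _ _) hle 2
    _ = _ := Real.sq_sqrt hRHS0
end

section
/- Let T and X be A-bounded operators on H. Then max{w_A(T), w_A(X)} + (1/2)·|w_A(T+X) − w_A(T−X)| ≤ max{w_A(T+X), w_A(T−X)}. -/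
section Aux
variable {H : Type*} [NormedAddCommGroup H] [InnerProductSpace ℂ H] [CompleteSpace H]
  {A : H →L[ℂ] H}

/-- The semi-inner-product core induced by a positive operator. -/
noncomputable def aCore (A : H →L[ℂ] H) (hA : A.IsPositive) : PreInnerProductSpace.Core ℂ H where
  inner x y := @inner ℂ H _ (A x) y
  conj_inner_symm x y := by
    rw [inner_conj_symm, ← ContinuousLinearMap.adjoint_inner_left,
      hA.isSelfAdjoint.adjoint_eq]
  re_inner_nonneg x := hA.re_inner_nonneg_left x
  add_left x y z := by simp [inner_add_left]
  smul_left x y r := by simp [inner_smul_left]; ring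

lemma sInner_cs (hA : A.IsPositive) (x y : H) :
    ‖sInner A x y‖ ≤ sNorm A x * sNorm A y := by
  have h := InnerProductSpace.Core.inner_mul_inner_self_le (𝕜 := ℂ) (F := H)
    (c := aCore A hA) x y
  have hxy : (@inner ℂ H (InnerProductSpace.Core.toPreInner' (c := aCore A hA)) x y)
      = sInner A x y := rfl
  have hyx : ‖(@inner ℂ H (InnerProductSpace.Core.toPreInner' (c := aCore A hA)) y x)‖
      = ‖sInner A x y‖ := by
    rw [← RCLike.norm_conj, InnerProductSpace.Core.inner_conj_symm (c := aCore A hA), hxy]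
  rw [hxy, hyx] at h
  have hx : (0:ℝ) ≤ (sInner A x x).re := hA.re_inner_nonneg_left x
  have hy : (0:ℝ) ≤ (sInner A y y).re := hA.re_inner_nonneg_left y
  have h' : ‖sInner A x y‖ * ‖sInner A x y‖ ≤ (sInner A x x).re * (sInner A y y).re := h
  have h2 : ‖sInner A x y‖ ≤ Real.sqrt ((sInner A x x).re * (sInner A y y).re) := by
    rw [← Real.sqrt_mul_self (norm_nonneg (sInner A x y))]
    exact Real.sqrt_le_sqrt h'
  unfold sNorm
  rw [← Real.sqrt_mul hx]
  exact h2


lemma numRad_nonneg_s14 (A T : H →L[ℂ] H) : 0 ≤ numRad A T := by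
  apply Real.sSup_nonneg
  rintro r ⟨x, hx, rfl⟩
  exact norm_nonneg _

lemma bddAbove_aux (hA : A.IsPositive) {T X S : H →L[ℂ] H} (hT : ABounded A T)
    (hX : ABounded A X)
    (hS : ∀ x : H, sInner A (S x) x = sInner A (T x) x + sInner A (X x) x ∨
                   sInner A (S x) x = sInner A (T x) x - sInner A (X x) x) :
    BddAbove {c | ∃ x : H, sNorm A x = 1 ∧ c = ‖sInner A (S x) x‖} := by
  obtain ⟨cT, _, hcT⟩ := hT; obtain ⟨cX, _, hcX⟩ := hX
  refine ⟨cT + cX, ?_⟩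
  rintro r ⟨x, hx, rfl⟩
  have h1 : ‖sInner A (T x) x‖ ≤ cT := by
    have h := sInner_cs hA (T x) x
    rw [hx, mul_one] at h
    refine h.trans ?_
    have := hcT x
    rwa [hx, mul_one] at this
  have h2 : ‖sInner A (X x) x‖ ≤ cX := by
    have h := sInner_cs hA (X x) x
    rw [hx, mul_one] at h
    refine h.trans ?_
    have := hcX x
    rwa [hx, mul_one] at this
  rcases hS x with h | h
  · rw [h]; exact (norm_add_le _ _).trans (add_le_add h1 h2)
  · rw [h]; exact (norm_sub_le _ _).trans (add_le_add h1 h2)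

lemma sInner_add (A T X : H →L[ℂ] H) (x : H) :
    sInner A ((T + X) x) x = sInner A (T x) x + sInner A (X x) x := by
  simp [sInner, inner_add_left]

lemma sInner_sub (A T X : H →L[ℂ] H) (x : H) :
    sInner A ((T - X) x) x = sInner A (T x) x - sInner A (X x) x := by
  simp [sInner, inner_sub_left]

lemma numRad_le_half (hA : A.IsPositive) {T X : H →L[ℂ] H} (hT : ABounded A T)
    (hX : ABounded A X) :
    numRad A T ≤ (numRad A (T + X) + numRad A (T - X)) / 2 ∧
    numRad A X ≤ (numRad A (T + X) + numRad A (T - X)) / 2 := by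
  have bddP := bddAbove_aux hA hT hX (fun x => Or.inl (sInner_add A T X x))
  have bddM := bddAbove_aux hA hT hX (fun x => Or.inr (sInner_sub A T X x))
  have hnn : 0 ≤ (numRad A (T + X) + numRad A (T - X)) / 2 := by
    have := numRad_nonneg_s14 A (T + X); have := numRad_nonneg_s14 A (T - X); linarith
  constructor
  · refine Real.sSup_le ?_ hnn
    rintro r ⟨x, hx, rfl⟩
    have e1 : ‖sInner A ((T + X) x) x‖ ≤ numRad A (T + X) := le_csSup bddP ⟨x, hx, rfl⟩
    have e2 : ‖sInner A ((T - X) x) x‖ ≤ numRad A (T - X) := le_csSup bddM ⟨x, hx, rfl⟩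
    have key : sInner A ((T + X) x) x + sInner A ((T - X) x) x = 2 * sInner A (T x) x := by
      rw [sInner_add, sInner_sub]; ring
    have h2 : (2:ℝ) * ‖sInner A (T x) x‖
        ≤ ‖sInner A ((T + X) x) x‖ + ‖sInner A ((T - X) x) x‖ := by
      calc (2:ℝ) * ‖sInner A (T x) x‖ = ‖(2:ℂ) * sInner A (T x) x‖ := by
            rw [norm_mul]; norm_num
      _ = ‖sInner A ((T + X) x) x + sInner A ((T - X) x) x‖ := by rw [key]
      _ ≤ _ := norm_add_le _ _
    linarith
  · refine Real.sSup_le ?_ hnn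
    rintro r ⟨x, hx, rfl⟩
    have e1 : ‖sInner A ((T + X) x) x‖ ≤ numRad A (T + X) := le_csSup bddP ⟨x, hx, rfl⟩
    have e2 : ‖sInner A ((T - X) x) x‖ ≤ numRad A (T - X) := le_csSup bddM ⟨x, hx, rfl⟩
    have key : sInner A ((T + X) x) x - sInner A ((T - X) x) x = 2 * sInner A (X x) x := by
      rw [sInner_add, sInner_sub]; ring
    have h2 : (2:ℝ) * ‖sInner A (X x) x‖
        ≤ ‖sInner A ((T + X) x) x‖ + ‖sInner A ((T - X) x) x‖ := by
      calc (2:ℝ) * ‖sInner A (X x) x‖ = ‖(2:ℂ) * sInner A (X x) x‖ := by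
            rw [norm_mul]; norm_num
      _ = ‖sInner A ((T + X) x) x - sInner A ((T - X) x) x‖ := by rw [key]
      _ ≤ _ := norm_sub_le _ _
    linarith

end Aux

theorem stmt14 {H : Type*} [NormedAddCommGroup H] [InnerProductSpace ℂ H] [CompleteSpace H]
    (A : H →L[ℂ] H) (hA : A.IsPositive)
    (T X : H →L[ℂ] H) (hT : ABounded A T) (hX : ABounded A X) :
    max (numRad A T) (numRad A X) + (1 / 2) * |numRad A (T + X) - numRad A (T - X)| ≤
      max (numRad A (T + X)) (numRad A (T - X)) := by
  obtain ⟨h1, h2⟩ := numRad_le_half hA hT hX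
  have hm : max (numRad A T) (numRad A X)
      ≤ (numRad A (T + X) + numRad A (T - X)) / 2 := max_le h1 h2
  rcases le_total (numRad A (T + X)) (numRad A (T - X)) with h | h
  · rw [abs_of_nonpos (by linarith), max_eq_right h]; linarith
  · rw [abs_of_nonneg (by linarith), max_eq_left h]; linarith
end
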